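/- arXiv:0912.3168 — 2 statements merged into one kernel-verified Lean document; each statement's English description precedes it below -/
import Mathlib

section
/- Let $0<H<1$ and let $\phi(t) = \int_0^{\infty}\bigl((t+x)^{H-1/2} - x^{H-1/2}\bigr)^2\,dx$ for $t>0$. Then $\phi$ is twice differentiable on $(0,\infty)$ with $\phi''(t) = (2H-1)\, t^{2H-2}\,\bigl(-1 + (3/2-H)\, B(2-2H, H+1/2)\bigr)$, where $B$ is the Beta function. -/
open MeasureTheory intervalIntegral

open Set MeasureTheory intervalIntegral


private lemma integrableOn_piecewise (c1 c2 c3 b e : ℝ) (hb : -1 < b) (he : e < -1) :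
    IntegrableOn (fun x : ℝ => if x ≤ 1 then c1 + c2 * x ^ b else c3 * x ^ e) (Set.Ioi (0:ℝ)) := by
  rw [← Set.Ioc_union_Ioi_eq_Ioi (zero_le_one (α := ℝ))]
  apply IntegrableOn.union
  · have h1 : IntegrableOn (fun x : ℝ => c1 + c2 * x ^ b) (Set.Ioc (0:ℝ) 1) := by
      apply Integrable.add
      · exact integrableOn_const measure_Ioc_lt_top.ne
      · exact ((intervalIntegrable_rpow' hb (a := 0) (b := 1)).1).const_mul c2
    exact h1.congr_fun (fun x hx => by simp [hx.2]) measurableSet_Ioc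
  · have h2 : IntegrableOn (fun x : ℝ => c3 * x ^ e) (Set.Ioi (1:ℝ)) :=
      (integrableOn_Ioi_rpow_of_lt he one_pos).const_mul c3
    exact h2.congr_fun (fun x hx => by simp [not_le.2 (mem_Ioi.1 hx)]) measurableSet_Ioi

private lemma abs_rpow_sub_rpow_le {a : ℝ} (ha : a ≤ 1) {x t : ℝ} (hx : 0 < x) (ht : 0 ≤ t) :
    |(t + x) ^ a - x ^ a| ≤ |a| * x ^ (a - 1) * t := by
  have key := Convex.norm_image_sub_le_of_norm_hasDerivWithin_le
    (f := fun y : ℝ => y ^ a) (f' := fun y : ℝ => a * y ^ (a - 1)) (s := Set.Icc x (x + t))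
    (C := |a| * x ^ (a - 1))
    (fun y hy => (Real.hasDerivAt_rpow_const
      (Or.inl (ne_of_gt (lt_of_lt_of_le hx hy.1)))).hasDerivWithinAt)
    (fun y hy => by
      have h1 : y ^ (a - 1) ≤ x ^ (a - 1) :=
        Real.rpow_le_rpow_of_nonpos hx hy.1 (by linarith)
      have h2 : (0:ℝ) ≤ y ^ (a - 1) := Real.rpow_nonneg (le_trans hx.le hy.1) _
      rw [Real.norm_eq_abs, abs_mul, abs_of_nonneg h2]
      exact mul_le_mul_of_nonneg_left h1 (abs_nonneg a))
    (convex_Icc _ _) (Set.left_mem_Icc.2 (by linarith)) (Set.right_mem_Icc.2 (by linarith))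
  rw [Real.norm_eq_abs, Real.norm_eq_abs] at key
  have : |x + t - x| = t := by rw [add_sub_cancel_left, abs_of_nonneg ht]
  rw [this] at key
  rwa [add_comm x t] at key

private lemma contOn_rpow_mul {t : ℝ} (ht : 0 < t) (p q : ℝ) :
    ContinuousOn (fun x : ℝ => (t + x) ^ p * x ^ q) (Set.Ioi (0:ℝ)) := by
  apply ContinuousOn.mul
  · exact ContinuousOn.rpow_const (by fun_prop) (fun x hx => Or.inl (by simp at hx; linarith))
  · exact ContinuousOn.rpow_const continuousOn_id (fun x hx => Or.inl (ne_of_gt hx))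

private lemma integrableOn_rpow_mul {t p q : ℝ} (ht : 0 < t) (hp : p ≤ 0) (hq : -1 < q)
    (hpq : p + q < -1) :
    IntegrableOn (fun x : ℝ => (t + x) ^ p * x ^ q) (Set.Ioi (0:ℝ)) := by
  apply Integrable.mono' (integrableOn_piecewise 0 (t ^ p) 1 q (p + q) hq hpq)
  · exact (contOn_rpow_mul ht p q).aestronglyMeasurable measurableSet_Ioi
  · filter_upwards [ae_restrict_mem measurableSet_Ioi] with x hx
    have hx0 : (0:ℝ) < x := hx
    have htx : (0:ℝ) < t + x := by linarith
    rw [Real.norm_eq_abs, abs_of_nonneg (mul_nonneg (Real.rpow_nonneg htx.le _)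
      (Real.rpow_nonneg hx0.le _))]
    by_cases h1 : x ≤ 1
    · rw [if_pos h1, zero_add]
      exact mul_le_mul_of_nonneg_right
        (Real.rpow_le_rpow_of_nonpos ht (by linarith) hp) (Real.rpow_nonneg hx0.le _)
    · rw [if_neg h1, one_mul, Real.rpow_add hx0]
      exact mul_le_mul_of_nonneg_right
        (Real.rpow_le_rpow_of_nonpos hx0 (by linarith) hp) (Real.rpow_nonneg hx0.le _)

private lemma sq_rpow (x p : ℝ) (hx : 0 ≤ x) : (x ^ p) ^ 2 = x ^ (2 * p) := by
  rw [← Real.rpow_natCast (x ^ p) 2, ← Real.rpow_mul hx]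
  norm_num [mul_comm]

private lemma integrableOn_sq {a t : ℝ} (ha1 : -(1/2) < a) (ha2 : a < 1/2) (ht : 0 < t) :
    IntegrableOn (fun x : ℝ => ((t + x) ^ a - x ^ a) ^ 2) (Set.Ioi (0:ℝ)) := by
  apply Integrable.mono'
    (integrableOn_piecewise (2 * (t ^ (2*a) + (t+1) ^ (2*a))) 2 (a^2 * t^2) (2*a) (2*a-2)
      (by linarith) (by linarith))
  · have hcont : ContinuousOn (fun x : ℝ => ((t + x) ^ a - x ^ a) ^ 2) (Set.Ioi (0:ℝ)) := by
      apply ContinuousOn.pow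
      apply ContinuousOn.sub
      · exact ContinuousOn.rpow_const (by fun_prop) (fun x hx => Or.inl (by simp at hx; linarith))
      · exact ContinuousOn.rpow_const continuousOn_id (fun x hx => Or.inl (ne_of_gt hx))
    exact hcont.aestronglyMeasurable measurableSet_Ioi
  · filter_upwards [ae_restrict_mem measurableSet_Ioi] with x hx
    have hx0 : (0:ℝ) < x := hx
    have htx : (0:ℝ) < t + x := by linarith
    have hfn : ‖((t + x) ^ a - x ^ a) ^ 2‖ = ((t + x) ^ a - x ^ a) ^ 2 := by
      rw [Real.norm_eq_abs, abs_of_nonneg (sq_nonneg _)]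
    rw [hfn]
    by_cases h1 : x ≤ 1
    · rw [if_pos h1]
      have e1 : ((t + x) ^ a - x ^ a) ^ 2 ≤ 2 * ((t+x)^a)^2 + 2 * (x^a)^2 := by nlinarith [sq_nonneg ((t+x)^a + x^a)]
      have e2 : ((t+x)^a)^2 = (t+x)^(2*a) := sq_rpow _ _ htx.le
      have e3 : (x^a)^2 = x^(2*a) := sq_rpow _ _ hx0.le
      have e4 : (t+x)^(2*a) ≤ t^(2*a) + (t+1)^(2*a) := by
        rcases le_or_gt 0 (2*a) with h | h
        · refine le_trans (Real.rpow_le_rpow htx.le (show t+x ≤ t+1 by linarith) h) ?_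
          have : (0:ℝ) ≤ t ^ (2*a) := Real.rpow_nonneg ht.le _
          linarith
        · refine le_trans (Real.rpow_le_rpow_of_nonpos ht (by linarith) h.le) ?_
          have : (0:ℝ) ≤ (t+1) ^ (2*a) := Real.rpow_nonneg (by linarith) _
          linarith
      rw [e2, e3] at e1
      linarith
    · rw [if_neg h1]
      have hmvt := abs_rpow_sub_rpow_le (by linarith : a ≤ 1) hx0 ht.le
      have e1 : ((t + x) ^ a - x ^ a) ^ 2 ≤ (|a| * x ^ (a-1) * t) ^ 2 := by
        rw [← sq_abs]
        exact pow_le_pow_left₀ (abs_nonneg _) hmvt 2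
      have e2 : (|a| * x ^ (a-1) * t) ^ 2 = a^2 * t^2 * x^(2*a-2) := by
        have : (x ^ (a-1))^2 = x ^ (2*a-2) := by
          rw [sq_rpow _ _ hx0.le]; ring_nf
        rw [mul_pow, mul_pow, sq_abs, this]; ring
      rw [e2] at e1
      exact e1

private lemma hasDerivAt_inner1 (a : ℝ) {x t : ℝ} (hx : 0 < x) (ht : 0 < t) :
    HasDerivAt (fun s : ℝ => ((s + x) ^ a - x ^ a) ^ 2)
      (2 * a * ((t + x) ^ (2*a-1) - (t + x) ^ (a-1) * x ^ a)) t := by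
  have htx : 0 < t + x := by linarith
  have h1 : HasDerivAt (fun s : ℝ => s + x) 1 t := (hasDerivAt_id t).add_const x
  have h2 : HasDerivAt (fun s : ℝ => (s + x) ^ a) (a * (t + x) ^ (a - 1)) t := by
    simpa [Function.comp_def] using (Real.hasDerivAt_rpow_const (p := a) (Or.inl htx.ne')).comp t h1
  have h3 := (h2.sub_const (x ^ a)).pow 2
  convert h3 using 1
  · rfl
  · rfl
  · rfl
  have key : (t + x) ^ (a-1) * (t + x) ^ a = (t + x) ^ (2*a-1) := by
    rw [← Real.rpow_add htx]; ring_nf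
  rw [← key]
  push_cast
  ring

private lemma hasDerivAt_inner2 (a : ℝ) {x t : ℝ} (hx : 0 < x) (ht : 0 < t) :
    HasDerivAt (fun s : ℝ => 2 * a * ((s + x) ^ (2*a-1) - (s + x) ^ (a-1) * x ^ a))
      (2 * a * ((2*a-1) * (t + x) ^ (2*a-2) - (a-1) * (t + x) ^ (a-2) * x ^ a)) t := by
  have htx : 0 < t + x := by linarith
  have h1 : HasDerivAt (fun s : ℝ => s + x) 1 t := (hasDerivAt_id t).add_const x
  have h2 : HasDerivAt (fun s : ℝ => (s + x) ^ (2*a-1)) ((2*a-1) * (t + x) ^ (2*a-1-1)) t := by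
    simpa [Function.comp_def] using (Real.hasDerivAt_rpow_const (p := 2*a-1) (Or.inl htx.ne')).comp t h1
  have h3 : HasDerivAt (fun s : ℝ => (s + x) ^ (a-1)) ((a-1) * (t + x) ^ (a-1-1)) t := by
    simpa [Function.comp_def] using (Real.hasDerivAt_rpow_const (p := a-1) (Or.inl htx.ne')).comp t h1
  have h4 := ((h2.sub (h3.mul_const (x ^ a))).const_mul (2 * a))
  convert h4 using 1
  · rfl
  · rfl
  · rfl
  rw [show 2*a-1-1 = 2*a-2 by ring, show a-1-1 = a-2 by ring]

private lemma contOn_sq {a : ℝ} {s : ℝ} (hs : 0 < s) :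
    ContinuousOn (fun x : ℝ => ((s + x) ^ a - x ^ a) ^ 2) (Set.Ioi (0:ℝ)) := by
  apply ContinuousOn.pow
  apply ContinuousOn.sub
  · exact ContinuousOn.rpow_const (by fun_prop) (fun x hx => Or.inl (by simp at hx; linarith))
  · exact ContinuousOn.rpow_const continuousOn_id (fun x hx => Or.inl (ne_of_gt hx))

private lemma contOn_F' {a : ℝ} {s : ℝ} (hs : 0 < s) :
    ContinuousOn (fun x : ℝ => 2*a*((s+x)^(2*a-1) - (s+x)^(a-1)*x^a)) (Set.Ioi (0:ℝ)) := by
  have h : ContinuousOn (fun x : ℝ => (s+x)^(2*a-1) - (s+x)^(a-1)*x^a) (Set.Ioi (0:ℝ)) := by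
    apply ContinuousOn.sub
    · exact ContinuousOn.rpow_const (by fun_prop) (fun x hx => Or.inl (by simp at hx; linarith))
    · exact contOn_rpow_mul hs (a-1) a
  exact continuousOn_const.mul h

private lemma bound_F' {a t : ℝ} (ha1 : -(1/2) < a) (ha2 : a < 1/2) (ht : 0 < t)
    {x s : ℝ} (hx : 0 < x) (hs1 : t/2 < s) (hs2 : s < 3*t/2) :
    ‖2*a*((s+x)^(2*a-1) - (s+x)^(a-1)*x^a)‖ ≤
      (if x ≤ 1 then 2* |a| *(t/2)^(2*a-1) + (2* |a| *(t/2)^(a-1)) * x^a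
       else (3*a^2*t) * x^(2*a-2)) := by
  have hsx : 0 < s + x := by linarith
  have ht2 : (0:ℝ) < t/2 := by linarith
  have habs : |2*a| = 2 * |a| := by rw [abs_mul, abs_two]
  by_cases h1 : x ≤ 1
  · rw [if_pos h1, Real.norm_eq_abs, abs_mul, habs]
    have e1 : |(s+x)^(2*a-1) - (s+x)^(a-1)*x^a| ≤ (s+x)^(2*a-1) + (s+x)^(a-1)*x^a := by
      refine (abs_sub _ _).trans ?_
      rw [abs_of_nonneg (Real.rpow_nonneg hsx.le _),
        abs_of_nonneg (mul_nonneg (Real.rpow_nonneg hsx.le _) (Real.rpow_nonneg hx.le _))]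
    have m1 : (s+x)^(2*a-1) ≤ (t/2)^(2*a-1) :=
      Real.rpow_le_rpow_of_nonpos ht2 (by linarith) (by linarith)
    have m2 : (s+x)^(a-1)*x^a ≤ (t/2)^(a-1)*x^a :=
      mul_le_mul_of_nonneg_right
        (Real.rpow_le_rpow_of_nonpos ht2 (by linarith) (by linarith))
        (Real.rpow_nonneg hx.le _)
    calc 2* |a| * |(s+x)^(2*a-1) - (s+x)^(a-1)*x^a|
        ≤ 2* |a| * ((t/2)^(2*a-1) + (t/2)^(a-1)*x^a) := by
          apply mul_le_mul_of_nonneg_left (e1.trans (by linarith)) (by positivity)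
      _ = 2* |a| *(t/2)^(2*a-1) + (2* |a| *(t/2)^(a-1)) * x^a := by ring
  · rw [if_neg h1]
    have key : (s+x)^(2*a-1) - (s+x)^(a-1)*x^a = (s+x)^(a-1) * ((s+x)^a - x^a) := by
      rw [mul_sub, ← Real.rpow_add hsx]; ring_nf
    rw [key, Real.norm_eq_abs, abs_mul, habs, abs_mul, abs_of_nonneg (Real.rpow_nonneg hsx.le _)]
    have m1 : (s+x)^(a-1) ≤ x^(a-1) :=
      Real.rpow_le_rpow_of_nonpos hx (by linarith) (by linarith)
    have m2 : |(s+x)^a - x^a| ≤ |a| * x^(a-1) * (3*t/2) := by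
      refine (abs_rpow_sub_rpow_le (by linarith) hx (by linarith)).trans ?_
      exact mul_le_mul_of_nonneg_left hs2.le (by positivity)
    have haa : |a| * |a| = a^2 := by rw [abs_mul_abs_self, sq]
    calc 2* |a| * ((s+x)^(a-1) * |(s+x)^a - x^a|)
        ≤ 2* |a| * (x^(a-1) * (|a| * x^(a-1) * (3*t/2))) := by
          apply mul_le_mul_of_nonneg_left _ (by positivity)
          exact mul_le_mul m1 m2 (abs_nonneg _) (Real.rpow_nonneg hx.le _)
      _ = 3*(|a| * |a|)*t * (x^(a-1) * x^(a-1)) := by ring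
      _ = (3*a^2*t) * x^(2*a-2) := by
          rw [haa, ← Real.rpow_add hx]; ring_nf

private lemma step1 {a t : ℝ} (ha1 : -(1/2) < a) (ha2 : a < 1/2) (ht : 0 < t) :
    Integrable (fun x : ℝ => 2*a*((t+x)^(2*a-1) - (t+x)^(a-1)*x^a))
      (volume.restrict (Set.Ioi (0:ℝ))) ∧
    HasDerivAt (fun s : ℝ => ∫ x in Set.Ioi (0:ℝ), ((s+x)^a - x^a)^2)
      (∫ x in Set.Ioi (0:ℝ), 2*a*((t+x)^(2*a-1) - (t+x)^(a-1)*x^a)) t := by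
  refine hasDerivAt_integral_of_dominated_loc_of_deriv_le (μ := volume.restrict (Set.Ioi 0))
    (F := fun s x => ((s+x)^a - x^a)^2)
    (F' := fun s x => 2*a*((s+x)^(2*a-1) - (s+x)^(a-1)*x^a))
    (x₀ := t) (s := Metric.ball t (t/2))
    (bound := fun x => if x ≤ 1 then 2* |a| *(t/2)^(2*a-1) + (2* |a| *(t/2)^(a-1)) * x^a
        else (3*a^2*t) * x^(2*a-2))
    (Metric.ball_mem_nhds t (by positivity)) ?_ ?_ ?_ ?_ ?_ ?_
  · filter_upwards [eventually_gt_nhds (show t/2 < t by linarith)] with s hs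
    exact (contOn_sq (by linarith)).aestronglyMeasurable measurableSet_Ioi
  · exact integrableOn_sq ha1 ha2 ht
  · exact (contOn_F' ht).aestronglyMeasurable measurableSet_Ioi
  · filter_upwards [ae_restrict_mem measurableSet_Ioi] with x hx s hs
    rw [Real.ball_eq_Ioo] at hs
    exact bound_F' ha1 ha2 ht hx (by linarith [hs.1]) (by linarith [hs.2])
  · exact integrableOn_piecewise _ _ _ _ _ (by linarith) (by linarith)
  · filter_upwards [ae_restrict_mem measurableSet_Ioi] with x hx s hs
    rw [Real.ball_eq_Ioo] at hs
    exact hasDerivAt_inner1 a hx (by linarith [hs.1])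

private lemma bound_G' {a t : ℝ} (ha2 : a < 1/2) (ht : 0 < t)
    {x s : ℝ} (hx : 0 < x) (hs1 : t/2 < s) (hs2 : s < 3*t/2) :
    ‖2*a*((2*a-1)*(s+x)^(2*a-2) - (a-1)*(s+x)^(a-2)*x^a)‖ ≤
      (if x ≤ 1 then 2* |a| * |2*a-1| *(t/2)^(2*a-2) + (2* |a| * |a-1| *(t/2)^(a-2)) * x^a
       else (2* |a| *(|2*a-1| + |a-1|)) * x^(2*a-2)) := by
  have hsx : 0 < s + x := by linarith
  have ht2 : (0:ℝ) < t/2 := by linarith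
  have habs : |2*a| = 2 * |a| := by rw [abs_mul, abs_two]
  rw [Real.norm_eq_abs, abs_mul, habs]
  have e1 : |(2*a-1)*(s+x)^(2*a-2) - (a-1)*(s+x)^(a-2)*x^a| ≤
      |2*a-1| * (s+x)^(2*a-2) + |a-1| * ((s+x)^(a-2)*x^a) := by
    refine (abs_sub _ _).trans ?_
    rw [abs_mul, abs_of_nonneg (Real.rpow_nonneg hsx.le _), mul_assoc, abs_mul,
      abs_of_nonneg (mul_nonneg (Real.rpow_nonneg hsx.le _) (Real.rpow_nonneg hx.le _))]
  by_cases h1 : x ≤ 1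
  · rw [if_pos h1]
    have m1 : (s+x)^(2*a-2) ≤ (t/2)^(2*a-2) :=
      Real.rpow_le_rpow_of_nonpos ht2 (by linarith) (by linarith)
    have m2 : (s+x)^(a-2)*x^a ≤ (t/2)^(a-2)*x^a :=
      mul_le_mul_of_nonneg_right
        (Real.rpow_le_rpow_of_nonpos ht2 (by linarith) (by linarith))
        (Real.rpow_nonneg hx.le _)
    calc 2* |a| * |(2*a-1)*(s+x)^(2*a-2) - (a-1)*(s+x)^(a-2)*x^a|
        ≤ 2* |a| * (|2*a-1| * (t/2)^(2*a-2) + |a-1| * ((t/2)^(a-2)*x^a)) := by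
          refine mul_le_mul_of_nonneg_left (e1.trans ?_) (by positivity)
          have := mul_le_mul_of_nonneg_left m1 (abs_nonneg (2*a-1))
          have := mul_le_mul_of_nonneg_left m2 (abs_nonneg (a-1))
          linarith
      _ = 2* |a| * |2*a-1| *(t/2)^(2*a-2) + (2* |a| * |a-1| *(t/2)^(a-2)) * x^a := by ring
  · rw [if_neg h1]
    have m1 : (s+x)^(2*a-2) ≤ x^(2*a-2) :=
      Real.rpow_le_rpow_of_nonpos hx (by linarith) (by linarith)
    have m2 : (s+x)^(a-2)*x^a ≤ x^(2*a-2) := by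
      have : (s+x)^(a-2) ≤ x^(a-2) :=
        Real.rpow_le_rpow_of_nonpos hx (by linarith) (by linarith)
      refine (mul_le_mul_of_nonneg_right this (Real.rpow_nonneg hx.le _)).trans_eq ?_
      rw [← Real.rpow_add hx]; ring_nf
    calc 2* |a| * |(2*a-1)*(s+x)^(2*a-2) - (a-1)*(s+x)^(a-2)*x^a|
        ≤ 2* |a| * (|2*a-1| * x^(2*a-2) + |a-1| * x^(2*a-2)) := by
          refine mul_le_mul_of_nonneg_left (e1.trans ?_) (by positivity)
          have := mul_le_mul_of_nonneg_left m1 (abs_nonneg (2*a-1))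
          have := mul_le_mul_of_nonneg_left m2 (abs_nonneg (a-1))
          linarith
      _ = (2* |a| *(|2*a-1| + |a-1|)) * x^(2*a-2) := by ring

private lemma contOn_G' {a : ℝ} {s : ℝ} (hs : 0 < s) :
    ContinuousOn (fun x : ℝ => 2*a*((2*a-1)*(s+x)^(2*a-2) - (a-1)*(s+x)^(a-2)*x^a))
      (Set.Ioi (0:ℝ)) := by
  have h : ContinuousOn (fun x : ℝ => (s+x)^(2*a-2)) (Set.Ioi (0:ℝ)) :=
    ContinuousOn.rpow_const (by fun_prop) (fun x hx => Or.inl (by simp at hx; linarith))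
  have h2 : ContinuousOn (fun x : ℝ => (a-1)*((s+x)^(a-2)*x^a)) (Set.Ioi (0:ℝ)) :=
    continuousOn_const.mul (contOn_rpow_mul hs (a-2) a)
  exact continuousOn_const.mul ((continuousOn_const.mul h).sub
    (h2.congr (fun x _ => by ring)))

private lemma step2 {a t : ℝ} (ha1 : -(1/2) < a) (ha2 : a < 1/2) (ht : 0 < t)
    (hint : Integrable (fun x : ℝ => 2*a*((t+x)^(2*a-1) - (t+x)^(a-1)*x^a))
      (volume.restrict (Set.Ioi (0:ℝ)))) :
    HasDerivAt (fun s : ℝ => ∫ x in Set.Ioi (0:ℝ), 2*a*((s+x)^(2*a-1) - (s+x)^(a-1)*x^a))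
      (∫ x in Set.Ioi (0:ℝ), 2*a*((2*a-1)*(t+x)^(2*a-2) - (a-1)*(t+x)^(a-2)*x^a)) t := by
  refine (hasDerivAt_integral_of_dominated_loc_of_deriv_le
    (μ := volume.restrict (Set.Ioi 0))
    (F := fun s x => 2*a*((s+x)^(2*a-1) - (s+x)^(a-1)*x^a))
    (F' := fun s x => 2*a*((2*a-1)*(s+x)^(2*a-2) - (a-1)*(s+x)^(a-2)*x^a))
    (x₀ := t) (s := Metric.ball t (t/2))
    (bound := fun x => if x ≤ 1 then 2* |a| * |2*a-1| *(t/2)^(2*a-2) + (2* |a| * |a-1| *(t/2)^(a-2)) * x^a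
       else (2* |a| *(|2*a-1| + |a-1|)) * x^(2*a-2))
    (Metric.ball_mem_nhds t (by positivity)) ?_ hint ?_ ?_ ?_ ?_).2
  · filter_upwards [eventually_gt_nhds (show t/2 < t by linarith)] with s hs
    exact (contOn_F' (by linarith)).aestronglyMeasurable measurableSet_Ioi
  · exact (contOn_G' ht).aestronglyMeasurable measurableSet_Ioi
  · filter_upwards [ae_restrict_mem measurableSet_Ioi] with x hx s hs
    rw [Real.ball_eq_Ioo] at hs
    exact bound_G' ha2 ht hx (by linarith [hs.1]) (by linarith [hs.2])
  · exact integrableOn_piecewise _ _ _ _ _ (by linarith) (by linarith)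
  · filter_upwards [ae_restrict_mem measurableSet_Ioi] with x hx s hs
    rw [Real.ball_eq_Ioo] at hs
    exact hasDerivAt_inner2 a hx (by linarith [hs.1])

private lemma integral_A {a t : ℝ} (ha2 : a < 1/2) (ht : 0 < t) :
    ∫ x in Set.Ioi (0:ℝ), (t+x)^(2*a-2) = t^(2*a-1)/(1-2*a) := by
  have hne : (2*a-1 : ℝ) ≠ 0 := by intro h; rw [show (2*a-1:ℝ) = 0 ↔ a = 1/2 by constructor <;> (intro; linarith)] at h; linarith
  have hderiv : ∀ x ∈ Set.Ici (0:ℝ), HasDerivAt (fun x : ℝ => (t+x)^(2*a-1)/(2*a-1))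
      ((t+x)^(2*a-2)) x := by
    intro x hx
    have hx0 : (0:ℝ) ≤ x := hx
    have htx : 0 < t + x := by linarith
    have h1 : HasDerivAt (fun x : ℝ => t + x) 1 x := (hasDerivAt_id x).const_add t
    have h2 := ((Real.hasDerivAt_rpow_const (p := 2*a-1) (Or.inl htx.ne')).comp x h1).div_const
      (2*a-1)
    have h3 : (2*a-1) * (t+x)^(2*a-1-1) * 1 / (2*a-1) = (t+x)^(2*a-2) := by
      rw [show 2*a-1-1 = 2*a-2 by ring]; field_simp
    rw [← h3]
    exact h2
  have hint : IntegrableOn (fun x : ℝ => (t+x)^(2*a-2)) (Set.Ioi 0) := by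
    have h := integrableOn_rpow_mul ht (p := 2*a-2) (q := 0) (by linarith) (by norm_num)
      (by linarith)
    exact h.congr_fun (fun x _ => by beta_reduce; rw [Real.rpow_zero, mul_one]) measurableSet_Ioi
  have htend : Filter.Tendsto (fun x : ℝ => (t+x)^(2*a-1)/(2*a-1)) Filter.atTop (nhds 0) := by
    have h0 : Filter.Tendsto (fun x : ℝ => t + x) Filter.atTop Filter.atTop :=
      Filter.tendsto_atTop_add_const_left _ t Filter.tendsto_id
    have h1 := (tendsto_rpow_neg_atTop (show (0:ℝ) < 1-2*a by linarith)).comp h0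
    rw [show -(1-2*a) = 2*a-1 by ring] at h1
    have h2 := h1.div_const (2*a-1)
    simpa [Function.comp] using h2
  rw [MeasureTheory.integral_Ioi_of_hasDerivAt_of_tendsto' hderiv hint htend]
  rw [add_zero, zero_sub]
  have h12 : (1-2*a:ℝ) ≠ 0 := by intro h; apply hne; linarith
  field_simp
  ring

private lemma integral_J {a t : ℝ} (ht : 0 < t) :
    ∫ x in Set.Ioi (0:ℝ), (t+x)^(a-2)*x^a
      = t^(2*a-1) * ∫ u in Set.Ioo (0:ℝ) 1, u^(-(2*a))*(1-u)^a := by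
  have ht' : t ≠ 0 := ne_of_gt ht
  have himg : (fun u : ℝ => t/u - t) '' Set.Ioo 0 1 = Set.Ioi (0:ℝ) := by
    ext y
    simp only [Set.mem_image, Set.mem_Ioo, Set.mem_Ioi]
    constructor
    · rintro ⟨u, ⟨hu0, hu1⟩, rfl⟩
      have : t < t/u := by rw [lt_div_iff₀ hu0]; nlinarith
      linarith
    · intro hy
      refine ⟨t/(t+y), ⟨by positivity, ?_⟩, ?_⟩
      · rw [div_lt_one (by linarith)]; linarith
      · have h2 : t + y ≠ 0 := by positivity
        field_simp
        ring
  have hderiv : ∀ u ∈ Set.Ioo (0:ℝ) 1, HasDerivWithinAt (fun u : ℝ => t/u - t)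
      (-(t/u^2)) (Set.Ioo 0 1) u := by
    intro u hu
    have hu0 : u ≠ 0 := ne_of_gt hu.1
    have h := ((hasDerivAt_inv hu0).const_mul t).sub_const t
    have e : t * -(u^2)⁻¹ = -(t/u^2) := by field_simp
    rw [e] at h
    exact (h.congr_of_eventuallyEq (by filter_upwards with v; rw [div_eq_mul_inv])).hasDerivWithinAt
  have hinj : Set.InjOn (fun u : ℝ => t/u - t) (Set.Ioo 0 1) := by
    intro u hu v hv h
    have hu0 : u ≠ 0 := ne_of_gt hu.1
    have hv0 : v ≠ 0 := ne_of_gt hv.1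
    simp only [sub_left_inj] at h
    rw [div_eq_div_iff hu0 hv0] at h
    exact (mul_left_cancel₀ ht' h).symm
  rw [← himg, MeasureTheory.integral_image_eq_integral_abs_deriv_smul
    measurableSet_Ioo hderiv hinj, ← MeasureTheory.integral_const_mul]
  refine setIntegral_congr_fun measurableSet_Ioo (fun u hu => ?_)
  obtain ⟨hu0, hu1⟩ := hu
  have hu0' : u ≠ 0 := ne_of_gt hu0
  have h1u : (0:ℝ) < 1 - u := by linarith
  have e0 : t + (t/u - t) = t/u := by ring
  have e1 : t/u - t = t*(1-u)/u := by field_simp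
  rw [smul_eq_mul, e0, e1, abs_neg, abs_of_pos (by positivity)]
  have hlog : ∀ x y : ℝ, 0 < x → 0 < y → Real.log x = Real.log y → x = y := fun x y hx hy h =>
    Real.exp_log hx ▸ Real.exp_log hy ▸ congrArg Real.exp h
  apply hlog _ _ (by positivity) (by positivity)
  simp (disch := positivity) only [Real.log_mul, Real.log_div, Real.log_rpow, Real.log_pow]
  push_cast
  ring



/-- For `0 < H < 1`, the function `φ(t) = ∫_0^∞ ((t+x)^{H-1/2} - x^{H-1/2})² dx` is twice
differentiable on `(0,∞)` with
`φ''(t) = (2H-1) t^{2H-2} (-1 + (3/2-H) B(2-2H, H+1/2))`. -/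
theorem stmt4 (H : ℝ) (h0 : 0 < H) (h1 : H < 1)
    (φ : ℝ → ℝ)
    (hφ : ∀ t : ℝ, φ t = ∫ x in Set.Ioi (0:ℝ), ((t + x) ^ (H - 1/2) - x ^ (H - 1/2)) ^ 2) :
    ∀ t : ℝ, 0 < t →
      HasDerivAt φ (deriv φ t) t ∧
      HasDerivAt (deriv φ)
        ((2 * H - 1) * t ^ (2 * H - 2)
          * (-1 + (3/2 - H) * ∫ u in (0:ℝ)..1, u ^ (2 - 2*H - 1) * (1 - u) ^ (H + 1/2 - 1))) t := by
  intro t ht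
  have ha1 : -(1/2 : ℝ) < H - 1/2 := by linarith
  have ha2 : (H - 1/2 : ℝ) < 1/2 := by linarith
  have hφe : φ = fun s : ℝ =>
      ∫ x in Set.Ioi (0:ℝ), ((s + x) ^ (H - 1/2) - x ^ (H - 1/2)) ^ 2 := funext hφ
  set ψ : ℝ → ℝ := fun s =>
    ∫ x in Set.Ioi (0:ℝ),
      2*(H-1/2)*((s+x)^(2*(H-1/2)-1) - (s+x)^((H-1/2)-1)*x^(H-1/2)) with hψdef
  have hstep1 : ∀ s : ℝ, 0 < s → HasDerivAt φ (ψ s) s := by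
    intro s hs
    rw [hφe]
    exact (step1 ha1 ha2 hs).2
  have hd : ∀ s : ℝ, 0 < s → deriv φ s = ψ s := fun s hs => (hstep1 s hs).deriv
  have hev : deriv φ =ᶠ[nhds t] ψ := by
    filter_upwards [isOpen_Ioi.mem_nhds (Set.mem_Ioi.2 ht)] with s hs
    exact hd s hs
  have hψ : HasDerivAt ψ
      (∫ x in Set.Ioi (0:ℝ),
        2*(H-1/2)*((2*(H-1/2)-1)*(t+x)^(2*(H-1/2)-2)
          - ((H-1/2)-1)*(t+x)^((H-1/2)-2)*x^(H-1/2))) t :=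
    step2 ha1 ha2 ht (step1 ha1 ha2 ht).1
  constructor
  · rw [hd t ht]
    exact hstep1 t ht
  · have h2 := hψ.congr_of_eventuallyEq hev
    convert h2 using 1
    · rfl
    · rfl
    have i1 : IntegrableOn (fun x : ℝ => (t+x)^(2*(H-1/2)-2)) (Set.Ioi 0) := by
      have h := integrableOn_rpow_mul ht (p := 2*(H-1/2)-2) (q := 0) (by linarith) (by norm_num)
        (by linarith)
      exact h.congr_fun (fun x _ => by beta_reduce; rw [Real.rpow_zero, mul_one]) measurableSet_Ioi
    have i2 : IntegrableOn (fun x : ℝ => (t+x)^((H-1/2)-2)*x^(H-1/2)) (Set.Ioi 0) :=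
      integrableOn_rpow_mul ht (by linarith) (by linarith) (by linarith)
    have hsplit : (∫ x in Set.Ioi (0:ℝ),
        2*(H-1/2)*((2*(H-1/2)-1)*(t+x)^(2*(H-1/2)-2)
          - ((H-1/2)-1)*(t+x)^((H-1/2)-2)*x^(H-1/2)))
        = (2*(H-1/2)*(2*(H-1/2)-1)) * (∫ x in Set.Ioi (0:ℝ), (t+x)^(2*(H-1/2)-2))
          - (2*(H-1/2)*((H-1/2)-1)) * (∫ x in Set.Ioi (0:ℝ), (t+x)^((H-1/2)-2)*x^(H-1/2)) := by
      rw [← MeasureTheory.integral_const_mul, ← MeasureTheory.integral_const_mul,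
        ← MeasureTheory.integral_sub ((i1.const_mul _)) ((i2.const_mul _))]
      exact setIntegral_congr_fun measurableSet_Ioi (fun x _ => by ring)
    rw [hsplit, integral_A ha2 ht, integral_J ht]
    have hB : (∫ u in (0:ℝ)..1, u ^ (2 - 2*H - 1) * (1 - u) ^ (H + 1/2 - 1))
        = ∫ u in Set.Ioo (0:ℝ) 1, u^(-(2*(H-1/2)))*(1-u)^(H-1/2) := by
      rw [intervalIntegral.integral_of_le zero_le_one, MeasureTheory.integral_Ioc_eq_integral_Ioo,
        show 2 - 2*H - 1 = -(2*(H-1/2)) by ring, show H + 1/2 - 1 = H - 1/2 by ring]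
    rw [hB, show 2*(H-1/2)-1 = 2*H-2 by ring]
    have hne : (1 - 2*(H-1/2) : ℝ) ≠ 0 := by intro h; linarith [h]
    generalize t ^ (2*H-2 : ℝ) = T
    generalize (∫ u in Set.Ioo (0:ℝ) 1, u^(-(2*(H-1/2)))*(1-u)^(H-1/2)) = B
    have hne2 : (2 - H*2 : ℝ) ≠ 0 := by intro h; linarith
    have hc : (2 - H*2) * (2 - H*2)⁻¹ = 1 := mul_inv_cancel₀ hne2
    field_simp
    linear_combination (-(T*(2-4*H))) * hc
end

section
/- Let $0<\beta<1$, $\gamma,\delta\in\mathbb{R}$, and for $f:(0,\infty)\to\mathbb{R}$ define the Hölder seminorm $N(f) = \sup_{s<t} |f(t)-f(s)|\,/\,\bigl((t-s)^{\beta}\sup_{s\le u\le t} u^{\gamma,\delta}\bigr)$ where $t^{\gamma,\delta}=t^{\gamma}1_{\{t\le1\}}+t^{\delta}1_{\{t>1\}}$, and the dyadic seminorm $N'(f) = \sup\{ |f(t)-f(s)|\,/\,((2^n)^{\gamma,\delta}(t-s)^{\beta}) : 2^n\le s\le t\le 2^{n+1},\, n\in\mathbb{Z}\}$. If $\gamma\ge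 0$ and $\delta\ge 0$, then there exists $C>0$ (depending only on $\beta,\gamma,\delta$) such that $N'(f)\le C\,N(f)$ and $N(f)\le C\,N'(f)$ for all $f$. -/
open MeasureTheory

noncomputable def Wfun (γ δ : ℝ) : ℝ → ℝ := fun u => if u ≤ 1 then u ^ γ else u ^ δ

lemma zp2_mono {n m : ℤ} (h : n ≤ m) : (2:ℝ) ^ n ≤ (2:ℝ) ^ m := by gcongr <;> norm_num

lemma Wfun_nonneg {γ δ : ℝ} (hγ : 0 ≤ γ) (hδ : 0 ≤ δ) (u : ℝ) (hu : 0 ≤ u) :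
    0 ≤ Wfun γ δ u := by
  unfold Wfun
  by_cases h : u ≤ 1 <;> simp only [h, if_true, if_false] <;>
    exact Real.rpow_nonneg hu _

lemma Wfun_mono {γ δ : ℝ} (hγ : 0 ≤ γ) (hδ : 0 ≤ δ) {u v : ℝ} (hu : 0 ≤ u) (huv : u ≤ v) :
    Wfun γ δ u ≤ Wfun γ δ v := by
  unfold Wfun
  by_cases hv : v ≤ 1
  · have hu1 : u ≤ 1 := huv.trans hv
    simp only [hu1, hv, if_true]
    exact Real.rpow_le_rpow hu huv hγ
  · by_cases hu1 : u ≤ 1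
    · simp only [hu1, hv, if_true, if_false]
      exact (Real.rpow_le_one hu hu1 hγ).trans (Real.one_le_rpow (by push_neg at hv; linarith) hδ)
    · simp only [hu1, hv, if_false]
      exact Real.rpow_le_rpow (by push_neg at hu1; linarith) huv hδ

/-- doubling bound at dyadic points -/
lemma Wfun_dbl {γ δ : ℝ} (hγ : 0 ≤ γ) (hδ : 0 ≤ δ) (n : ℤ) :
    Wfun γ δ ((2:ℝ) ^ (n+1)) ≤ ((2:ℝ) ^ γ + (2:ℝ) ^ δ) * Wfun γ δ ((2:ℝ) ^ n) := by
  have hp : (0:ℝ) < 2 ^ n := zpow_pos two_pos n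
  have hgpos : (0:ℝ) ≤ 2 ^ γ := Real.rpow_nonneg (by norm_num) _
  have hdpos : (0:ℝ) ≤ 2 ^ δ := Real.rpow_nonneg (by norm_num) _
  have hsplit : (2:ℝ) ^ (n+1) = (2:ℝ) ^ n * 2 := zpow_add_one₀ two_ne_zero n
  unfold Wfun
  by_cases h1 : (2:ℝ) ^ (n+1) ≤ 1
  · have h0 : (2:ℝ) ^ n ≤ 1 := le_trans (zp2_mono (by omega)) h1
    simp only [h1, h0, if_true]
    rw [hsplit, Real.mul_rpow hp.le (by norm_num)]
    nlinarith [Real.rpow_nonneg hp.le γ]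
  · by_cases h0 : (2:ℝ) ^ n ≤ 1
    · have hn0 : n = 0 := by
        have ha : n ≤ 0 := by
          by_contra hcon
          push_neg at hcon
          have := zp2_mono (show (1:ℤ) ≤ n by omega)
          norm_num at this; linarith
        have hb : 0 ≤ n := by
          by_contra hcon
          push_neg at hcon
          have := zp2_mono (show n + 1 ≤ 0 by omega)
          rw [zpow_zero] at this; exact h1 this
        omega
      subst hn0
      norm_num at h1 ⊢
      exact hgpos
    · simp only [h1, h0, if_false]
      rw [hsplit, Real.mul_rpow hp.le (by norm_num)]
      nlinarith [Real.rpow_nonneg hp.le δ]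

/-- subadditivity consequence: `b^β - a^β ≤ (b-a)^β` -/
lemma rpow_sub_le {β : ℝ} (hβ0 : 0 ≤ β) (hβ1 : β ≤ 1) {a b : ℝ}
    (ha : 0 ≤ a) (hab : a ≤ b) : b ^ β ≤ a ^ β + (b - a) ^ β := by
  have hb : 0 ≤ b := ha.trans hab
  have hc : 0 ≤ b - a := by linarith
  have h := NNReal.rpow_add_le_add_rpow a.toNNReal (b - a).toNNReal hβ0 hβ1
  have he : a.toNNReal + (b - a).toNNReal = b.toNNReal := by
    rw [← Real.toNNReal_add ha hc]; norm_num
  rw [he] at h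
  have h2 := NNReal.coe_le_coe.2 h
  rw [NNReal.coe_rpow, NNReal.coe_add, NNReal.coe_rpow, NNReal.coe_rpow,
    Real.coe_toNNReal _ hb, Real.coe_toNNReal _ ha, Real.coe_toNNReal _ hc] at h2
  exact h2

lemma stmt8_dir1 (β γ δ : ℝ) (hβ0 : 0 < β) (hγ : 0 ≤ γ) (hδ : 0 ≤ δ)
    (f : ℝ → ℝ) (M : ℝ) (hM : 0 ≤ M)
    (hf : ∀ s t : ℝ, 0 < s → s ≤ t →
      |f t - f s| ≤ M * (t - s) ^ β * sSup (Wfun γ δ '' Set.Icc s t)) :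
    ∀ (n : ℤ) (s t : ℝ), (2:ℝ) ^ n ≤ s → s ≤ t → t ≤ (2:ℝ) ^ (n+1) →
      |f t - f s| ≤ ((2:ℝ)^γ + (2:ℝ)^δ + 2 + 1/((2:ℝ)^β-1)) * M * Wfun γ δ ((2:ℝ) ^ n) * (t - s) ^ β := by
  intro n s t h1 h2 h3
  have h2β : (1:ℝ) < 2 ^ β :=
    (Real.one_lt_rpow_iff_of_pos two_pos).2 (Or.inl ⟨one_lt_two, hβ0⟩)
  have hcpos : (0:ℝ) < 1/((2:ℝ)^β-1) := by
    apply div_pos one_pos; linarith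
  have hp : (0:ℝ) < 2 ^ n := zpow_pos two_pos n
  have hs0 : 0 < s := lt_of_lt_of_le hp h1
  have hW0 : 0 ≤ Wfun γ δ ((2:ℝ)^n) := Wfun_nonneg hγ hδ _ hp.le
  have hX : 0 ≤ (t - s) ^ β := Real.rpow_nonneg (by linarith) β
  have key := hf s t hs0 h2
  have hsup : sSup (Wfun γ δ '' Set.Icc s t) ≤ ((2:ℝ)^γ + (2:ℝ)^δ) * Wfun γ δ ((2:ℝ)^n) := by
    apply Real.sSup_le
    · rintro x ⟨u, hu, rfl⟩
      exact le_trans (Wfun_mono hγ hδ (le_trans hp.le (h1.trans hu.1)) (hu.2.trans h3))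
        (Wfun_dbl hγ hδ n)
    · have hgpos : (0:ℝ) ≤ 2 ^ γ := Real.rpow_nonneg (by norm_num) _
      have hdpos : (0:ℝ) ≤ 2 ^ δ := Real.rpow_nonneg (by norm_num) _
      positivity
  have hMX : 0 ≤ M * (t - s) ^ β := mul_nonneg hM hX
  calc |f t - f s| ≤ M * (t - s) ^ β * sSup (Wfun γ δ '' Set.Icc s t) := key
    _ ≤ M * (t - s) ^ β * (((2:ℝ)^γ + (2:ℝ)^δ) * Wfun γ δ ((2:ℝ)^n)) :=
        mul_le_mul_of_nonneg_left hsup hMX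
    _ ≤ ((2:ℝ)^γ + (2:ℝ)^δ + 2 + 1/((2:ℝ)^β-1)) * M * Wfun γ δ ((2:ℝ) ^ n) * (t - s) ^ β := by
        nlinarith [mul_nonneg (mul_nonneg hM hW0) hX, hcpos]

lemma stmt8_dir2 (β γ δ : ℝ) (hβ0 : 0 < β) (hβ1 : β < 1) (hγ : 0 ≤ γ) (hδ : 0 ≤ δ)
    (f : ℝ → ℝ) (M : ℝ) (hM : 0 ≤ M)
    (hd : ∀ (n : ℤ) (s t : ℝ), (2:ℝ) ^ n ≤ s → s ≤ t → t ≤ (2:ℝ) ^ (n+1) →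
      |f t - f s| ≤ M * Wfun γ δ ((2:ℝ) ^ n) * (t - s) ^ β) :
    ∀ s t : ℝ, 0 < s → s ≤ t →
      |f t - f s| ≤ ((2:ℝ)^γ + (2:ℝ)^δ + 2 + 1/((2:ℝ)^β-1)) * M * (t - s) ^ β * sSup (Wfun γ δ '' Set.Icc s t) := by
  intro s t hs hst
  have h2β : (1:ℝ) < 2 ^ β :=
    (Real.one_lt_rpow_iff_of_pos two_pos).2 (Or.inl ⟨one_lt_two, hβ0⟩)
  have hd1 : (0:ℝ) < 2^β - 1 := by linarith
  have hcpos : (0:ℝ) < 1/((2:ℝ)^β-1) := div_pos one_pos hd1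
  have hgpos : (0:ℝ) ≤ 2 ^ γ := Real.rpow_nonneg (by norm_num) _
  have hdpos : (0:ℝ) ≤ 2 ^ δ := Real.rpow_nonneg (by norm_num) _
  have ht0 : 0 < t := hs.trans_le hst
  have hX : 0 ≤ (t - s) ^ β := Real.rpow_nonneg (by linarith) β
  set S := sSup (Wfun γ δ '' Set.Icc s t) with hS
  have hbdd : BddAbove (Wfun γ δ '' Set.Icc s t) := by
    refine ⟨Wfun γ δ t, ?_⟩
    rintro x ⟨u, hu, rfl⟩
    exact Wfun_mono hγ hδ (hs.le.trans hu.1) hu.2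
  have hsup : Wfun γ δ t ≤ S := le_csSup hbdd ⟨t, ⟨hst, le_refl t⟩, rfl⟩
  have hS0 : 0 ≤ S := (Wfun_nonneg hγ hδ t ht0.le).trans hsup
  obtain ⟨n, hn1, hn2⟩ := exists_mem_Ico_zpow hs one_lt_two
  obtain ⟨m, hm1, hm2⟩ := exists_mem_Ico_zpow ht0 one_lt_two
  -- dyadic chaining lemma
  have lemA : ∀ (j : ℕ) (k : ℤ), |f ((2:ℝ)^(k+(j:ℤ))) - f ((2:ℝ)^k)| ≤
      M * Wfun γ δ ((2:ℝ)^(k+(j:ℤ))) *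
        ((((2:ℝ)^(k+(j:ℤ)))^β - (((2:ℝ)^k))^β) / ((2:ℝ)^β - 1)) := by
    intro j
    induction j with
    | zero =>
      intro k
      simp
    | succ j ih =>
      intro k
      have hcast : (k + ((j+1:ℕ):ℤ)) = (k + (j:ℤ)) + 1 := by push_cast; ring
      rw [hcast]
      have hpa : (0:ℝ) < 2 ^ (k+(j:ℤ)) := zpow_pos two_pos _
      have hstep := hd (k+(j:ℤ)) ((2:ℝ)^(k+(j:ℤ))) ((2:ℝ)^(k+(j:ℤ)+1)) le_rfl
        (zp2_mono (by omega)) le_rfl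
      have hgap : (2:ℝ)^(k+(j:ℤ)+1) - (2:ℝ)^(k+(j:ℤ)) = (2:ℝ)^(k+(j:ℤ)) := by
        rw [zpow_add_one₀ two_ne_zero]; ring
      have hpow : ((2:ℝ)^(k+(j:ℤ)))^β =
          ((((2:ℝ)^(k+(j:ℤ)+1))^β - (((2:ℝ)^(k+(j:ℤ))))^β) / ((2:ℝ)^β - 1)) := by
        rw [zpow_add_one₀ two_ne_zero, Real.mul_rpow hpa.le (by norm_num)]
        field_simp
      rw [hgap, hpow] at hstep
      have hWmono : Wfun γ δ ((2:ℝ)^(k+(j:ℤ))) ≤ Wfun γ δ ((2:ℝ)^(k+(j:ℤ)+1)) :=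
        Wfun_mono hγ hδ hpa.le (zp2_mono (by omega))
      have hbracket : 0 ≤ ((((2:ℝ)^(k+(j:ℤ)+1))^β - (((2:ℝ)^k))^β) / ((2:ℝ)^β - 1)) := by
        apply div_nonneg _ hd1.le
        have := Real.rpow_le_rpow (zpow_pos two_pos k).le (zp2_mono (show k ≤ k+(j:ℤ)+1 by omega)) hβ0.le
        linarith
      calc |f ((2:ℝ)^(k+(j:ℤ)+1)) - f ((2:ℝ)^k)|
          ≤ |f ((2:ℝ)^(k+(j:ℤ)+1)) - f ((2:ℝ)^(k+(j:ℤ)))| + |f ((2:ℝ)^(k+(j:ℤ))) - f ((2:ℝ)^k)| :=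
            abs_sub_le _ _ _
        _ ≤ M * Wfun γ δ ((2:ℝ)^(k+(j:ℤ))) *
              ((((2:ℝ)^(k+(j:ℤ)+1))^β - (((2:ℝ)^(k+(j:ℤ))))^β) / ((2:ℝ)^β - 1)) +
            M * Wfun γ δ ((2:ℝ)^(k+(j:ℤ))) *
              ((((2:ℝ)^(k+(j:ℤ)))^β - (((2:ℝ)^k))^β) / ((2:ℝ)^β - 1)) :=
            add_le_add hstep (ih k)
        _ = M * Wfun γ δ ((2:ℝ)^(k+(j:ℤ))) *
              ((((2:ℝ)^(k+(j:ℤ)+1))^β - (((2:ℝ)^k))^β) / ((2:ℝ)^β - 1)) := by ring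
        _ ≤ M * Wfun γ δ ((2:ℝ)^(k+(j:ℤ)+1)) *
              ((((2:ℝ)^(k+(j:ℤ)+1))^β - (((2:ℝ)^k))^β) / ((2:ℝ)^β - 1)) := by
            exact mul_le_mul_of_nonneg_right (mul_le_mul_of_nonneg_left hWmono hM) hbracket
  rcases le_or_gt ((2:ℝ)^m) s with hcase | hcase
  · -- same dyadic block
    have hkey := hd m s t hcase hst hm2.le
    have hWS : Wfun γ δ ((2:ℝ)^m) ≤ S :=
      le_trans (Wfun_mono hγ hδ (zpow_pos two_pos m).le hm1) hsup
    nlinarith [mul_nonneg hM hX, mul_nonneg (mul_nonneg hM hX) hS0,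
      Wfun_nonneg hγ hδ ((2:ℝ)^m) (zpow_pos two_pos m).le]
  · -- s < 2^m : chain through dyadic points
    have hnm : n + 1 ≤ m := by
      by_contra h
      push_neg at h
      have := zp2_mono (show m ≤ n by omega)
      linarith
    have h2n1m : (2:ℝ)^(n+1) ≤ (2:ℝ)^m := zp2_mono hnm
    have hpm : (0:ℝ) < 2^m := zpow_pos two_pos m
    have hpn : (0:ℝ) < 2^n := zpow_pos two_pos n
    have e1 := hd m ((2:ℝ)^m) t le_rfl hm1 hm2.le
    have e3 := hd n s ((2:ℝ)^(n+1)) hn1 hn2.le le_rfl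
    have hmt : (n+1) + (((m - (n+1)).toNat : ℤ)) = m := by omega
    have e2 := lemA (m - (n+1)).toNat (n+1)
    rw [hmt] at e2
    -- weight bounds
    have hWmS : Wfun γ δ ((2:ℝ)^m) ≤ S :=
      le_trans (Wfun_mono hγ hδ hpm.le hm1) hsup
    have hWnS : Wfun γ δ ((2:ℝ)^n) ≤ S :=
      le_trans (Wfun_mono hγ hδ hpn.le (le_trans hn1 hst)) hsup
    have hWm0 : 0 ≤ Wfun γ δ ((2:ℝ)^m) := Wfun_nonneg hγ hδ _ hpm.le
    have hWn0 : 0 ≤ Wfun γ δ ((2:ℝ)^n) := Wfun_nonneg hγ hδ _ hpn.le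
    -- increment bounds
    have hA1 : (t - (2:ℝ)^m) ^ β ≤ (t - s) ^ β :=
      Real.rpow_le_rpow (by linarith) (by linarith) hβ0.le
    have hA3 : ((2:ℝ)^(n+1) - s) ^ β ≤ (t - s) ^ β :=
      Real.rpow_le_rpow (by linarith [hn2.le]) (by linarith) hβ0.le
    have hsub : ((2:ℝ)^m)^β - ((2:ℝ)^(n+1))^β ≤ (t - s)^β := by
      have hq1 := rpow_sub_le hβ0.le hβ1.le (zpow_pos two_pos (n+1)).le h2n1m
      have hq2 : ((2:ℝ)^m - (2:ℝ)^(n+1))^β ≤ (t - s)^β :=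
        Real.rpow_le_rpow (by linarith) (by linarith [hn2.le, hm1]) hβ0.le
      linarith
    have hA2 : (((2:ℝ)^m)^β - ((2:ℝ)^(n+1))^β) / ((2:ℝ)^β - 1) ≤ (t - s)^β / ((2:ℝ)^β - 1) := by
      rw [div_eq_mul_inv, div_eq_mul_inv]
      exact mul_le_mul_of_nonneg_right hsub (inv_nonneg.2 hd1.le)
    have hbr2 : 0 ≤ (((2:ℝ)^m)^β - ((2:ℝ)^(n+1))^β) / ((2:ℝ)^β - 1) := by
      apply div_nonneg _ hd1.le
      have := Real.rpow_le_rpow (zpow_pos two_pos (n+1)).le h2n1m hβ0.le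
      linarith
    have b1 : |f t - f ((2:ℝ)^m)| ≤ M * S * (t - s)^β :=
      e1.trans (mul_le_mul (mul_le_mul_of_nonneg_left hWmS hM) hA1
        (Real.rpow_nonneg (by linarith) β) (mul_nonneg hM hS0))
    have b2 : |f ((2:ℝ)^m) - f ((2:ℝ)^(n+1))| ≤ M * S * ((t - s)^β / ((2:ℝ)^β - 1)) :=
      e2.trans (mul_le_mul (mul_le_mul_of_nonneg_left hWmS hM) hA2 hbr2 (mul_nonneg hM hS0))
    have b3 : |f ((2:ℝ)^(n+1)) - f s| ≤ M * S * (t - s)^β :=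
      e3.trans (mul_le_mul (mul_le_mul_of_nonneg_left hWnS hM) hA3
        (Real.rpow_nonneg (by linarith [hn2.le]) β) (mul_nonneg hM hS0))
    have htri : |f t - f s| ≤
        M * S * (t - s)^β + M * S * ((t - s)^β / ((2:ℝ)^β - 1)) + M * S * (t - s)^β := by
      have a1 := abs_sub_le (f t) (f ((2:ℝ)^m)) (f s)
      have a2 := abs_sub_le (f ((2:ℝ)^m)) (f ((2:ℝ)^(n+1))) (f s)
      linarith
    have h1 : 0 ≤ ((2:ℝ)^γ + (2:ℝ)^δ) * (M * (t - s)^β * S) :=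
      mul_nonneg (add_nonneg hgpos hdpos) (mul_nonneg (mul_nonneg hM hX) hS0)
    have expand : ((2:ℝ)^γ + (2:ℝ)^δ + 2 + 1/((2:ℝ)^β-1)) * M * (t - s)^β * S =
        ((2:ℝ)^γ + (2:ℝ)^δ) * (M * (t - s)^β * S) +
          (M * S * (t - s)^β + M * S * ((t - s)^β / ((2:ℝ)^β - 1)) + M * S * (t - s)^β) := by
      ring
    rw [expand]
    linarith [htri, h1]


/-- Equivalence of the weighted Hölder seminorm and its dyadic version, for `γ, δ ≥ 0`:
there is `C > 0` such that the dyadic seminorm is at most `C` times the full one and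
conversely (expressed pointwise on increments, with weight
`w u = u^γ` for `u ≤ 1` and `u^δ` for `u > 1`). -/
theorem stmt8 (β γ δ : ℝ) (hβ0 : 0 < β) (hβ1 : β < 1) (hγ : 0 ≤ γ) (hδ : 0 ≤ δ) :
    ∃ C > (0:ℝ), ∀ (f : ℝ → ℝ) (M : ℝ), 0 ≤ M →
      (let w : ℝ → ℝ := fun u => if u ≤ 1 then u ^ γ else u ^ δ
      ((∀ s t : ℝ, 0 < s → s ≤ t →
          |f t - f s| ≤ M * (t - s) ^ β * sSup (w '' Set.Icc s t)) →
        ∀ (n : ℤ) (s t : ℝ), (2:ℝ) ^ n ≤ s → s ≤ t → t ≤ (2:ℝ) ^ (n+1) →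
          |f t - f s| ≤ C * M * w ((2:ℝ) ^ n) * (t - s) ^ β) ∧
      ((∀ (n : ℤ) (s t : ℝ), (2:ℝ) ^ n ≤ s → s ≤ t → t ≤ (2:ℝ) ^ (n+1) →
          |f t - f s| ≤ M * w ((2:ℝ) ^ n) * (t - s) ^ β) →
        ∀ s t : ℝ, 0 < s → s ≤ t →
          |f t - f s| ≤ C * M * (t - s) ^ β * sSup (w '' Set.Icc s t))) := by

  have h2β : (1:ℝ) < 2 ^ β :=
    (Real.one_lt_rpow_iff_of_pos two_pos).2 (Or.inl ⟨one_lt_two, hβ0⟩)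
  have hgpos : (0:ℝ) < 2 ^ γ := Real.rpow_pos_of_pos (by norm_num) _
  have hdpos : (0:ℝ) < 2 ^ δ := Real.rpow_pos_of_pos (by norm_num) _
  have hcpos : (0:ℝ) < 1/((2:ℝ)^β-1) := div_pos one_pos (by linarith)
  refine ⟨(2:ℝ)^γ + (2:ℝ)^δ + 2 + 1/((2:ℝ)^β-1), by linarith, ?_⟩
  intro f M hM
  exact ⟨stmt8_dir1 β γ δ hβ0 hγ hδ f M hM, stmt8_dir2 β γ δ hβ0 hβ1 hγ hδ f M hM⟩
end
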